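/- arXiv:1709.05407 — 4 statements merged into one kernel-verified Lean document; each statement's English description precedes it below -/
import Mathlib

section
/- Let (X,τ) be a locally solid vector lattice and A an ideal of X. If the unbounded topology u_Aτ on X is submetrizable (i.e. finer than some metrizable linear topology on X), then there exists an at most countable subset of A that is a countable order basis for X. -/
open Filter Set Topology

variable {X : Type*} [Lattice X] [AddCommGroup X] [Module ℝ X]
  [CovariantClass X X (· + ·) (· ≤ ·)] [PosSMulMono ℝ X]

/-- The Archimedean property for a lattice-ordered group. -/
def VLArchimedean (X : Type*) [Lattice X] [AddCommGroup X] : Prop :=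
  ∀ x y : X, 0 ≤ x → (∀ n : ℕ, n • x ≤ y) → x = 0

/-- A set is solid if `x ∈ S` and `|y| ≤ |x|` imply `y ∈ S`. -/
def IsSolid (S : Set X) : Prop := ∀ ⦃x y : X⦄, x ∈ S → |y| ≤ |x| → y ∈ S

/-- A locally solid (linear) topology on a vector lattice. -/
def IsLocallySolidTop (τ : TopologicalSpace X) : Prop :=
  @IsTopologicalAddGroup X τ _ ∧ @ContinuousSMul ℝ X _ _ τ ∧
    ∀ U ∈ @nhds X τ 0, ∃ V ∈ @nhds X τ 0, IsSolid V ∧ V ⊆ U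

/-- An order ideal: a solid linear subspace. -/
def IsOrderIdeal (A : Set X) : Prop :=
  0 ∈ A ∧ (∀ x ∈ A, ∀ y ∈ A, x + y ∈ A) ∧ (∀ (c : ℝ), ∀ x ∈ A, c • x ∈ A) ∧ IsSolid A

/-- The order ideal generated by a set. -/
def idealGenerated (A : Set X) : Set X := ⋂₀ {I | IsOrderIdeal I ∧ A ⊆ I}

/-- A band: an order ideal closed under existing suprema. -/
def IsBand (B : Set X) : Prop :=
  IsOrderIdeal B ∧ ∀ D ⊆ B, ∀ x : X, IsLUB D x → x ∈ B

/-- The band generated by a set. -/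
def bandGenerated (A : Set X) : Set X := ⋂₀ {B | IsBand B ∧ A ⊆ B}

/-- `A` is a countable order basis: `A` is at most countable and generates `X` as a band. -/
def CountableOrderBasis (A : Set X) : Prop := A.Countable ∧ bandGenerated A = Set.univ

/-- The neighbourhood filter of zero of the unbounded topology `u_A τ`:
generated by the sets `{x : |x| ⊓ a ∈ U}` for `U` a `τ`-neighbourhood of zero, `a ∈ A₊`. -/
def unbNhdsZero (τ : TopologicalSpace X) (A : Set X) : Filter X :=
  ⨅ a ∈ {a ∈ A | 0 ≤ a}, Filter.comap (fun x => |x| ⊓ a) (@nhds X τ 0)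

/-- The unbounded topology `u_A τ` induced by the ideal `A`; `u τ = unbTopology τ Set.univ`. -/
def unbTopology (τ : TopologicalSpace X) (A : Set X) : TopologicalSpace X :=
  TopologicalSpace.mkOfNhds fun x => Filter.map (x + ·) (unbNhdsZero τ A)

/-- A sublattice/ideal is order dense if every nonzero positive vector dominates a
nonzero positive vector of it. -/
def OrderDense (A : Set X) : Prop := ∀ x : X, 0 < x → ∃ y ∈ A, 0 < y ∧ y ≤ x

/-- A minimal topology: a Hausdorff locally solid topology with no strictly coarser
Hausdorff locally solid topology. (In Mathlib's order on `TopologicalSpace`,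
`τ ≤ σ` means `τ` is finer than `σ`.) -/
def IsMinimalTop (τ : TopologicalSpace X) : Prop :=
  IsLocallySolidTop τ ∧ @T2Space X τ ∧
    ∀ σ : TopologicalSpace X, IsLocallySolidTop σ → @T2Space X σ → τ ≤ σ → σ = τ

/-- The countable sup property. -/
def CountableSupProperty (Y : Type*) [Lattice Y] : Prop :=
  ∀ S : Set Y, ∀ x : Y, S.Nonempty → IsLUB S x → ∃ C ⊆ S, C.Countable ∧ IsLUB C x

/-- Order convergence to zero of a net: there is a downward directed set `D` with
infimum `0`, each member of which eventually dominates `|x α|`. -/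
def OrderNull {ι : Type*} [Preorder ι] (x : ι → X) : Prop :=
  ∃ D : Set X, D.Nonempty ∧ (∀ a ∈ D, ∀ b ∈ D, ∃ c ∈ D, c ≤ a ∧ c ≤ b) ∧
    IsGLB D 0 ∧ ∀ d ∈ D, ∃ α₀ : ι, ∀ α, α₀ ≤ α → |x α| ≤ d

/-- Unbounded order (uo-) convergence to zero of a net. -/
def UoNull {ι : Type*} [Preorder ι] (x : ι → X) : Prop :=
  ∀ u : X, 0 ≤ u → OrderNull (fun α => |x α| ⊓ u)

/-- A set is topologically bounded if it is absorbed by every neighbourhood of zero. -/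
def TopBounded (τ : TopologicalSpace X) (S : Set X) : Prop :=
  ∀ U ∈ @nhds X τ 0, ∃ l : ℝ, 0 < l ∧ ∀ x ∈ S, l • x ∈ U

/-- A locally bounded topology: it has a topologically bounded neighbourhood of zero. -/
def LocallyBoundedTop (τ : TopologicalSpace X) : Prop :=
  ∃ V ∈ @nhds X τ 0, TopBounded τ V

/-- A submetrizable topology: finer than some metrizable linear topology.
(In Mathlib's order on `TopologicalSpace`, `τ ≤ σ` means `τ` is finer than `σ`.) -/
def Submetrizable (τ : TopologicalSpace X) : Prop :=
  ∃ σ : TopologicalSpace X, @IsTopologicalAddGroup X σ _ ∧ @ContinuousSMul ℝ X _ _ σ ∧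
    @TopologicalSpace.MetrizableSpace X σ ∧ τ ≤ σ

/-- A Riesz submetrizable topology: finer than some metrizable locally solid topology. -/
def RieszSubmetrizable (τ : TopologicalSpace X) : Prop :=
  ∃ σ : TopologicalSpace X, IsLocallySolidTop σ ∧ @TopologicalSpace.MetrizableSpace X σ ∧ τ ≤ σ

/-- Dedekind (order) completeness. -/
def DedekindComplete (Y : Type*) [Lattice Y] : Prop :=
  ∀ S : Set Y, S.Nonempty → BddAbove S → ∃ x, IsLUB S x

/-- Lateral completeness: every nonempty set of pairwise disjoint positive vectors
has a supremum. -/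
def LaterallyComplete (Y : Type*) [Lattice Y] [AddCommGroup Y] : Prop :=
  ∀ S : Set Y, S.Nonempty → (∀ x ∈ S, 0 ≤ x) → (S.Pairwise fun a b => a ⊓ b = 0) →
    ∃ x, IsLUB S x


theorem my_nhds_mkOfNhds_le {α : Type*} (n : α → Filter α) (a : α) :
    n a ≤ @nhds α (TopologicalSpace.mkOfNhds n) a := by
  rw [@le_nhds_iff]
  intro s has hs
  exact hs a has

theorem my_unb_mem {τ : TopologicalSpace X} {A : Set X} {s : Set X}
    (hs : s ∈ unbNhdsZero τ A) :
    ∃ F : Set X, F.Countable ∧ F ⊆ {a ∈ A | 0 ≤ a} ∧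
      ∀ x : X, (∀ a ∈ F, |x| ⊓ a = 0) → x ∈ s := by
  unfold unbNhdsZero at hs
  rw [iInf_subtype'] at hs
  rw [Filter.mem_iInf] at hs
  obtain ⟨I, hIfin, V, hV, rfl⟩ := hs
  refine ⟨Subtype.val '' I, (hIfin.image _).countable, ?_, ?_⟩
  · rintro a ⟨i, _, rfl⟩; exact i.2
  · intro x hx
    rw [Set.mem_iInter]
    intro i
    obtain ⟨W, hW, hWsub⟩ := Filter.mem_comap.mp (hV i)
    apply hWsub
    have h0 : |x| ⊓ ((i : {a // a ∈ {a ∈ A | 0 ≤ a}}) : X) = 0 :=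
      hx _ ⟨i, i.2, rfl⟩
    simp only [Set.mem_preimage, h0]
    exact mem_of_mem_nhds hW

theorem my_band_univ (hArch : VLArchimedean X) (B₀ : Set X) (hpos : ∀ a ∈ B₀, 0 ≤ a)
    (hzero : ∀ x : X, (∀ a ∈ B₀, |x| ⊓ a = 0) → x = 0) :
    bandGenerated B₀ = Set.univ := by
  ext x
  simp only [Set.mem_univ, iff_true, bandGenerated, Set.mem_sInter, Set.mem_setOf_eq]
  rintro C ⟨⟨⟨h0C, haddC, hsmulC, hsolidC⟩, hsupC⟩, hB₀C⟩
  have key : ∀ y : X, 0 ≤ y → y ∈ C := by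
    intro y hy
    set D : Set X := {d | ∃ c ∈ C, 0 ≤ c ∧ d = y ⊓ c} with hDdef
    have hDC : D ⊆ C := by
      rintro d ⟨c, hcC, hc0, rfl⟩
      exact hsolidC hcC (by
        rw [abs_of_nonneg (le_inf hy hc0), abs_of_nonneg hc0]; exact inf_le_right)
    refine hsupC D hDC y ⟨?_, ?_⟩
    · rintro d ⟨c, hcC, hc0, rfl⟩; exact inf_le_left
    · intro u hu
      set w : X := y - y ⊓ u with hwdef
      have hw0 : 0 ≤ w := sub_nonneg.2 inf_le_left
      have hweq : w = 0 := by
        apply hzero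
        intro a haB
        rw [abs_of_nonneg hw0]
        have haC : a ∈ C := hB₀C haB
        have ha0 : 0 ≤ a := hpos a haB
        have hwa0 : 0 ≤ w ⊓ a := le_inf hw0 ha0
        refine hArch _ y hwa0 ?_
        intro n
        induction n with
        | zero => simpa using hy
        | succ n ih =>
          have hc0 : 0 ≤ n • (w ⊓ a) := nsmul_nonneg hwa0 n
          have hcC : n • (w ⊓ a) ∈ C := by
            have hnaC : (n : ℝ) • a ∈ C := hsmulC _ a haC
            rw [Nat.cast_smul_eq_nsmul] at hnaC
            refine hsolidC hnaC ?_
            rw [abs_of_nonneg hc0, abs_of_nonneg (nsmul_nonneg ha0 n)]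
            exact nsmul_le_nsmul_right inf_le_right n
          have hcu : n • (w ⊓ a) ≤ u := hu ⟨_, hcC, hc0, (inf_eq_right.mpr ih).symm⟩
          have hyw : w ⊓ a ≤ y - n • (w ⊓ a) := by
            refine inf_le_left.trans ?_
            rw [hwdef]
            exact sub_le_sub_left (le_inf ih hcu) y
          calc (n + 1) • (w ⊓ a) = n • (w ⊓ a) + (w ⊓ a) := succ_nsmul _ n
            _ ≤ n • (w ⊓ a) + (y - n • (w ⊓ a)) := add_le_add_right hyw _
            _ = y := by abel
      have : y = y ⊓ u := by
        have := hweq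
        rw [hwdef, sub_eq_zero] at this
        exact this
      exact this.le.trans inf_le_right
  have h1 : |x| ∈ C := key |x| (abs_nonneg x)
  exact hsolidC h1 (by rw [abs_abs])

/-- if `u_A τ` is submetrizable then some subset of `A` is a countable
order basis for `X`. -/
theorem stmt0 (hArch : VLArchimedean X) (τ : TopologicalSpace X) (hτ : IsLocallySolidTop τ)
    (A : Set X) (hA : IsOrderIdeal A) (hsub : Submetrizable (unbTopology τ A)) :
    ∃ B ⊆ A, CountableOrderBasis B := by
  obtain ⟨σ, hg, hsm, hmet, hle⟩ := hsub
  letI := σ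
  haveI : TopologicalSpace.MetrizableSpace X := hmet
  -- the σ-neighbourhoods of 0 belong to `unbNhdsZero τ A`
  have hmem : ∀ s ∈ 𝓝 (0 : X), s ∈ unbNhdsZero τ A := by
    intro s hsσ
    have h1 : unbNhdsZero τ A ≤ @nhds X (unbTopology τ A) 0 := by
      have := my_nhds_mkOfNhds_le (fun x : X => Filter.map (x + ·) (unbNhdsZero τ A)) 0
      simp only [zero_add, Filter.map_id'] at this
      exact this
    have h2 : @nhds X (unbTopology τ A) 0 ≤ 𝓝 (0 : X) := nhds_mono hle
    exact h1 (h2 hsσ)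
  obtain ⟨sb, hsb⟩ := (𝓝 (0 : X)).exists_antitone_basis
  -- choose the finite disjointness witnesses for each basis set
  have hchoice : ∀ n : ℕ, ∃ F : Set X, F.Countable ∧ F ⊆ {a ∈ A | 0 ≤ a} ∧
      ∀ x : X, (∀ a ∈ F, |x| ⊓ a = 0) → x ∈ sb n :=
    fun n => my_unb_mem (hmem _ (hsb.toHasBasis.mem_of_mem trivial))
  choose F hFc hFsub hFdisj using hchoice
  refine ⟨⋃ n, F n, ?_, Set.countable_iUnion hFc, ?_⟩
  · exact Set.iUnion_subset fun n => (hFsub n).trans (Set.sep_subset _ _)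
  · refine my_band_univ hArch _ (fun a ha => ?_) (fun x hx => ?_)
    · obtain ⟨n, han⟩ := Set.mem_iUnion.mp ha
      exact (hFsub n han).2
    · by_contra hne
      have hxm : ∀ n, x ∈ sb n := fun n =>
        hFdisj n x fun a ha => hx a (Set.mem_iUnion.mpr ⟨n, ha⟩)
      have hopen : ({x}ᶜ : Set X) ∈ 𝓝 (0 : X) :=
        isOpen_compl_singleton.mem_nhds (by simpa using (Ne.symm hne))
      obtain ⟨n, -, hn⟩ := hsb.toHasBasis.mem_iff.mp hopen
      exact (hn (hxm n)) rfl
end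

section
/- Let A and B be ideals of a vector lattice X, and let τ and σ be locally solid topologies on X. If u_Bσ ⊆ u_Aτ as topologies on X (i.e. u_Bσ is coarser than u_Aτ), then the σ-closure of A ∩ B equals the σ-closure of B. -/
open Filter Set Topology

variable {X : Type*} [Lattice X] [AddCommGroup X] [Module ℝ X]
  [CovariantClass X X (· + ·) (· ≤ ·)] [PosSMulMono ℝ X]

section Aux

open Filter

private lemma swapCov : CovariantClass X X (Function.swap (· + ·)) (· ≤ ·) :=
  ⟨fun c a b h => by simpa [add_comm _ c] using add_le_add_left h c⟩

/-- Key Birkhoff-type inequality: `n • ((x - x ⊓ n•u) ⊓ u) ≤ x`. -/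
private lemma key_ineq (x u : X) (hx : 0 ≤ x) (hu : 0 ≤ u) (n : ℕ) :
    n • ((x - x ⊓ (n • u)) ⊓ u) ≤ x := by
  haveI := swapCov (X := X)
  set w := (x - x ⊓ (n • u)) ⊓ u with hw
  have hwu : w ≤ u := inf_le_right
  have hwk : ∀ k, k ≤ n → w ≤ x - x ⊓ (k • u) := by
    intro k hk
    refine le_trans inf_le_left (sub_le_sub_left ?_ x)
    exact inf_le_inf_left x (nsmul_le_nsmul_left hu hk)
  have claim : ∀ k, k ≤ n → k • w ≤ x ⊓ (k • u) := by
    intro k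
    induction k with
    | zero => intro _; simpa using le_inf hx le_rfl
    | succ k ih =>
      intro hk
      have hk' : k ≤ n := Nat.le_of_succ_le hk
      rw [succ_nsmul]
      refine le_inf ?_ ?_
      · have h1 : k • w ≤ x ⊓ (k • u) := ih hk'
        have h2 : w ≤ x - x ⊓ (k • u) := hwk k hk'
        calc k • w + w ≤ x ⊓ (k • u) + (x - x ⊓ (k • u)) := add_le_add h1 h2
          _ = x := by abel
      · rw [succ_nsmul]
        exact add_le_add (le_trans (ih hk') inf_le_right) hwu
  exact le_trans (claim n le_rfl) inf_le_left

/-- The truncation `y = (b ⊓ d) ⊔ (-d)` satisfies `|b - y| ≤ |b| - |b| ⊓ d`. -/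
private lemma trunc_abs_sub (b d : X) (hd : 0 ≤ d) :
    |b - ((b ⊓ d) ⊔ (-d))| ≤ |b| - |b| ⊓ d := by
  haveI := swapCov (X := X)
  set y := (b ⊓ d) ⊔ (-d) with hy
  rw [abs_le']
  constructor
  · -- b - y ≤ |b| - |b| ⊓ d
    rw [sub_le_sub_iff]
    calc b + |b| ⊓ d = (b + |b|) ⊓ (b + d) := add_inf _ _ _
      _ ≤ (|b| + b) ⊓ (|b| + d) := by
          exact inf_le_inf (le_of_eq (add_comm b |b|)) (add_le_add_left (le_abs_self b) d)
      _ = |b| + (b ⊓ d) := (add_inf _ _ _).symm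
      _ ≤ |b| + y := add_le_add_right le_sup_left |b|
  · -- -(b - y) ≤ |b| - |b| ⊓ d
    rw [neg_sub, sub_le_sub_iff]
    have h0b : (0 : X) ≤ b + |b| := by
      have h := add_le_add_left (neg_le.2 (neg_le_abs b)) |b|
      simpa using h
    have hyle : y ≤ b ⊔ (b + |b| - d) := by
      refine sup_le (le_trans inf_le_left le_sup_left) (le_sup_of_le_right ?_)
      have := sub_le_sub_right h0b d
      simpa using this
    calc y + (|b| ⊓ d) ≤ (b ⊔ (b + |b| - d)) + (|b| ⊓ d) := add_le_add_left hyle _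
      _ = (b + |b| ⊓ d) ⊔ (b + |b| - d + |b| ⊓ d) := sup_add _ _ _
      _ ≤ b + |b| := by
          refine sup_le (add_le_add_right inf_le_left b) ?_
          have h := add_le_add_right (inf_le_right : |b| ⊓ d ≤ d) (b + |b| - d)
          calc b + |b| - d + |b| ⊓ d ≤ b + |b| - d + d := h
            _ = b + |b| := by abel
      _ = |b| + b := add_comm _ _

private lemma trunc_abs_le_self (b d : X) (hd : 0 ≤ d) : |(b ⊓ d) ⊔ (-d)| ≤ d := by
  rw [abs_le']
  exact ⟨sup_le inf_le_right (le_trans (neg_nonpos.2 hd) hd), neg_le.2 le_sup_right⟩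

private lemma trunc_abs_le_abs (b d : X) (hd : 0 ≤ d) : |(b ⊓ d) ⊔ (-d)| ≤ |b| := by
  rw [abs_le']
  constructor
  · exact sup_le (le_trans inf_le_left (le_abs_self b))
      (le_trans (neg_nonpos.2 hd) (abs_nonneg b))
  · rw [neg_le]
    exact le_trans (le_inf (neg_le.2 (neg_le_abs b)) (le_trans (neg_nonpos.2 (abs_nonneg b)) hd))
      le_sup_left

/-- Subadditivity of meets of positive elements. -/
private lemma inf_subadd {u v a : X} (hu : 0 ≤ u) (hv : 0 ≤ v) (ha : 0 ≤ a) :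
    (u + v) ⊓ a ≤ u ⊓ a + v ⊓ a := by
  haveI := swapCov (X := X)
  rw [add_inf, inf_add, inf_add]
  refine le_inf (le_inf inf_le_left ?_) (le_inf ?_ ?_)
  · exact le_trans inf_le_right (le_add_of_nonneg_right hv)
  · exact le_trans inf_le_right (le_add_of_nonneg_left hu)
  · exact le_trans inf_le_right (le_add_of_nonneg_left ha)

private lemma mem_unbNhdsZero {τ : TopologicalSpace X} (hτ : IsLocallySolidTop τ)
    {A : Set X} (hA : IsOrderIdeal A) {s : Set X} :
    s ∈ unbNhdsZero τ A ↔
      ∃ a ∈ A, 0 ≤ a ∧ ∃ V ∈ @nhds X τ 0, IsSolid V ∧ {x : X | |x| ⊓ a ∈ V} ⊆ s := by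
  have hmono : ∀ a a' : X, 0 ≤ a → a ≤ a' →
      (Filter.comap (fun x : X => |x| ⊓ a') (@nhds X τ 0) : Filter X) ≤
        Filter.comap (fun x : X => |x| ⊓ a) (@nhds X τ 0) := by
    intro a a' ha0 haa' t ht
    obtain ⟨V, hV, hVsub⟩ := Filter.mem_comap.1 ht
    obtain ⟨V', hV', hV'solid, hV'sub⟩ := hτ.2.2 V hV
    refine Filter.mem_comap.2 ⟨V', hV', fun x hx => hVsub ?_⟩
    have h1 : (0 : X) ≤ |x| ⊓ a := le_inf (abs_nonneg x) ha0
    have h2 : |x| ⊓ a ≤ |x| ⊓ a' := inf_le_inf_left _ haa'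
    have : |x| ⊓ a ∈ V' := by
      refine hV'solid hx ?_
      rw [abs_of_nonneg h1, abs_of_nonneg (le_trans h1 h2)]
      exact h2
    exact hV'sub this
  have hdir : DirectedOn ((fun a : X => Filter.comap (fun x : X => |x| ⊓ a) (@nhds X τ 0))
      ⁻¹'o (· ≥ ·)) {a ∈ A | 0 ≤ a} := by
    rintro a ⟨haA, ha0⟩ b ⟨hbA, hb0⟩
    have habA : a ⊔ b ∈ A := by
      refine hA.2.2.2 (hA.2.1 a haA b hbA) ?_
      rw [abs_of_nonneg (le_trans ha0 le_sup_left), abs_of_nonneg (add_nonneg ha0 hb0)]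
      exact sup_le (le_add_of_nonneg_right hb0) (le_add_of_nonneg_left ha0)
    exact ⟨a ⊔ b, ⟨habA, le_trans ha0 le_sup_left⟩,
      hmono a (a ⊔ b) ha0 le_sup_left, hmono b (a ⊔ b) hb0 le_sup_right⟩
  rw [unbNhdsZero, Filter.mem_biInf_of_directed hdir ⟨0, hA.1, le_rfl⟩]
  constructor
  · rintro ⟨a, ⟨haA, ha0⟩, hs⟩
    obtain ⟨V, hV, hVsub⟩ := Filter.mem_comap.1 hs
    obtain ⟨V', hV', hV'solid, hV'sub⟩ := hτ.2.2 V hV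
    exact ⟨a, haA, ha0, V', hV', hV'solid,
      fun x hx => hVsub (hV'sub hx)⟩
  · rintro ⟨a, haA, ha0, V, hV, _, hVsub⟩
    exact ⟨a, ⟨haA, ha0⟩, Filter.mem_of_superset (Filter.preimage_mem_comap hV) hVsub⟩

private lemma zero_mem_unbNhdsZero {τ : TopologicalSpace X} (hτ : IsLocallySolidTop τ)
    {A : Set X} (hA : IsOrderIdeal A) {s : Set X} (hs : s ∈ unbNhdsZero τ A) : (0 : X) ∈ s := by
  obtain ⟨a, _, ha0, V, hV, _, hVsub⟩ := (mem_unbNhdsZero hτ hA).1 hs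
  refine hVsub ?_
  show |(0 : X)| ⊓ a ∈ V
  have : |(0 : X)| ⊓ a = 0 := by
    rw [abs_zero]
    exact inf_eq_left.2 ha0
  rw [this]
  exact mem_of_mem_nhds hV

private lemma half_unbNhdsZero {τ : TopologicalSpace X} (hτ : IsLocallySolidTop τ)
    {A : Set X} (hA : IsOrderIdeal A) {s : Set X} (hs : s ∈ unbNhdsZero τ A) :
    ∃ t ∈ unbNhdsZero τ A, ∀ p ∈ t, ∀ q ∈ t, p + q ∈ s := by
  letI := τ
  haveI := hτ.1
  obtain ⟨a, haA, ha0, V, hV, hVsolid, hVsub⟩ := (mem_unbNhdsZero hτ hA).1 hs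
  obtain ⟨V₁, hV₁, hhalf⟩ := exists_nhds_zero_half hV
  obtain ⟨V₂, hV₂, hV₂solid, hV₂sub⟩ := hτ.2.2 V₁ hV₁
  refine ⟨{x : X | |x| ⊓ a ∈ V₂}, ?_, ?_⟩
  · exact (mem_unbNhdsZero hτ hA).2 ⟨a, haA, ha0, V₂, hV₂, hV₂solid, subset_rfl⟩
  · intro p hp q hq
    have hsum : |p| ⊓ a + |q| ⊓ a ∈ V := hhalf _ (hV₂sub hp) _ (hV₂sub hq)
    have h1 : |p + q| ⊓ a ≤ |p| ⊓ a + |q| ⊓ a :=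
      le_trans (inf_le_inf_right a (abs_add_le p q))
        (inf_subadd (abs_nonneg p) (abs_nonneg q) ha0)
    have h0 : (0 : X) ≤ |p + q| ⊓ a := le_inf (abs_nonneg _) ha0
    refine hVsub ?_
    show |p + q| ⊓ a ∈ V
    refine hVsolid hsum ?_
    rw [abs_of_nonneg h0, abs_of_nonneg (le_trans h0 h1)]
    exact h1

private lemma nhds_unbTopology {τ : TopologicalSpace X} (hτ : IsLocallySolidTop τ)
    {A : Set X} (hA : IsOrderIdeal A) (x : X) :
    @nhds X (unbTopology τ A) x = Filter.map (x + ·) (unbNhdsZero τ A) := by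
  refine TopologicalSpace.nhds_mkOfNhds _ _ ?_ ?_
  · intro z s hs
    rw [Filter.mem_map] at hs
    have h0 : (0 : X) ∈ (z + ·) ⁻¹' s := zero_mem_unbNhdsZero hτ hA hs
    simpa using h0
  · intro z s hs
    rw [Filter.mem_map] at hs
    obtain ⟨t, htF, hhalf⟩ := half_unbNhdsZero hτ hA hs
    rw [Filter.eventually_map]
    filter_upwards [htF] with p hp
    rw [Filter.mem_map]
    refine Filter.mem_of_superset htF fun q hq => ?_
    have := hhalf p hp q hq
    simpa [add_assoc] using this

private lemma exists_inv_smul_mem {τ : TopologicalSpace X} (hτ : IsLocallySolidTop τ)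
    (c : X) {V : Set X} (hV : V ∈ @nhds X τ 0) : ∃ n : ℕ, 1 ≤ n ∧ (n : ℝ)⁻¹ • c ∈ V := by
  letI := τ
  haveI := hτ.2.1
  have hcont : Continuous fun t : ℝ => t • c := continuous_id.smul continuous_const
  have h1 : Filter.Tendsto (fun t : ℝ => t • c) (nhds 0) (nhds 0) := by
    simpa using hcont.tendsto 0
  have h2 : Filter.Tendsto (fun n : ℕ => ((n : ℝ))⁻¹) Filter.atTop (nhds 0) :=
    tendsto_inv_atTop_zero.comp tendsto_natCast_atTop_atTop
  have h3 : ∀ᶠ n : ℕ in Filter.atTop, ((n : ℝ))⁻¹ • c ∈ V := (h1.comp h2).eventually hV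
  obtain ⟨n, hn1, hmem⟩ := ((Filter.eventually_ge_atTop 1).and h3).exists
  exact ⟨n, hn1, hmem⟩

end Aux

/-- if `u_B σ ⊆ u_A τ` (i.e. `u_A τ` is finer), then the `σ`-closures of
`A ∩ B` and of `B` coincide. -/
theorem stmt2 (hArch : VLArchimedean X) (τ σ : TopologicalSpace X)
    (hτ : IsLocallySolidTop τ) (hσ : IsLocallySolidTop σ)
    (A B : Set X) (hA : IsOrderIdeal A) (hB : IsOrderIdeal B)
    (h : unbTopology τ A ≤ unbTopology σ B) :
    @closure X σ (A ∩ B) = @closure X σ B := by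
  letI := σ
  haveI hTG : IsTopologicalAddGroup X := hσ.1
  refine Set.Subset.antisymm (closure_mono Set.inter_subset_right) ?_
  refine closure_minimal (fun b hb => ?_) isClosed_closure
  rw [mem_closure_iff_nhds]
  intro t ht
  have hcont : ContinuousAt (fun z : X => b + z) 0 := (continuous_add_left b).continuousAt
  have ht0 : (fun z : X => b + z) ⁻¹' t ∈ nhds (0 : X) :=
    hcont.preimage_mem_nhds (by simpa using ht)
  obtain ⟨U, hU, hUsolid, hUsub⟩ := hσ.2.2 _ ht0
  suffices hcore : ∃ y ∈ A ∩ B, y - b ∈ U by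
    obtain ⟨y, hyAB, hyU⟩ := hcore
    have : b + (y - b) ∈ t := hUsub hyU
    exact ⟨y, by simpa using this, hyAB⟩
  set c := |b| with hc
  have hcB : c ∈ B := hB.2.2.2 hb (by rw [abs_abs])
  have hc0 : (0 : X) ≤ c := abs_nonneg b
  have hW : {x : X | |x| ⊓ c ∈ U} ∈ unbNhdsZero σ B :=
    (mem_unbNhdsZero hσ hB).2 ⟨c, hcB, hc0, U, hU, hUsolid, subset_rfl⟩
  have hW2 : {x : X | |x| ⊓ c ∈ U} ∈ unbNhdsZero τ A := by
    have h1 : {x : X | |x| ⊓ c ∈ U} ∈ @nhds X (unbTopology σ B) 0 := by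
      rw [nhds_unbTopology hσ hB, Filter.mem_map]
      simpa [zero_add] using hW
    have h2 : {x : X | |x| ⊓ c ∈ U} ∈ @nhds X (unbTopology τ A) 0 :=
      nhds_mono h h1
    rw [nhds_unbTopology hτ hA, Filter.mem_map] at h2
    simpa [zero_add] using h2
  obtain ⟨a, haA, ha0, V, hV, hVsolid, hVsub⟩ := (mem_unbNhdsZero hτ hA).1 hW2
  obtain ⟨n, hn1, hnV⟩ := exists_inv_smul_mem hτ c hV
  have hnpos : (0 : ℝ) < (n : ℝ) := by exact_mod_cast Nat.lt_of_lt_of_le Nat.zero_lt_one hn1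
  have hna : (0 : X) ≤ n • a := nsmul_nonneg ha0 n
  have hnaA : (n : ℕ) • a ∈ A := by
    rw [← Nat.cast_smul_eq_nsmul ℝ]
    exact hA.2.2.1 _ _ haA
  set y := (b ⊓ (n • a)) ⊔ (-(n • a)) with hy
  have hyA : y ∈ A := by
    refine hA.2.2.2 hnaA ?_
    rw [abs_of_nonneg hna]
    exact trunc_abs_le_self b (n • a) hna
  have hyB : y ∈ B := hB.2.2.2 hb (trunc_abs_le_abs b (n • a) hna)
  -- the element `z = c - c ⊓ (n•a)` lies in `U`
  have hz0 : (0 : X) ≤ c - c ⊓ (n • a) := sub_nonneg.2 inf_le_left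
  have hzc : c - c ⊓ (n • a) ≤ c := sub_le_self c (le_inf hc0 hna)
  have hxn : c - c ⊓ (n • a) ∈ U := by
    have hkey : n • ((c - c ⊓ (n • a)) ⊓ a) ≤ c := key_ineq c a hc0 ha0 n
    have h0w : (0 : X) ≤ (c - c ⊓ (n • a)) ⊓ a := le_inf hz0 ha0
    have hkey' : (n : ℝ) • ((c - c ⊓ (n • a)) ⊓ a) ≤ c := by
      rwa [Nat.cast_smul_eq_nsmul]
    have hle : (c - c ⊓ (n • a)) ⊓ a ≤ (n : ℝ)⁻¹ • c := by
      have := smul_le_smul_of_nonneg_left hkey' (inv_nonneg.2 hnpos.le)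
      rwa [smul_smul, inv_mul_cancel₀ hnpos.ne', one_smul] at this
    have hmemV : (c - c ⊓ (n • a)) ⊓ a ∈ V := by
      refine hVsolid hnV ?_
      rw [abs_of_nonneg h0w, abs_of_nonneg (smul_nonneg (inv_nonneg.2 hnpos.le) hc0)]
      exact hle
    have hmemW : c - c ⊓ (n • a) ∈ {x : X | |x| ⊓ c ∈ U} := by
      refine hVsub ?_
      show |c - c ⊓ (n • a)| ⊓ a ∈ V
      rwa [abs_of_nonneg hz0]
    have : |c - c ⊓ (n • a)| ⊓ c ∈ U := hmemW
    rwa [abs_of_nonneg hz0, inf_eq_left.2 hzc] at this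
  refine ⟨y, ⟨hyA, hyB⟩, ?_⟩
  have hdiff : |y - b| ≤ c - c ⊓ (n • a) := by
    rw [abs_sub_comm]
    exact trunc_abs_sub b (n • a) hna
  refine hUsolid hxn ?_
  rwa [abs_of_nonneg hz0]
end

section
/- Let A and B be ideals of a locally solid vector lattice (X,τ). Then u_Aτ = u_Bτ if and only if the τ-closure of A equals the τ-closure of B. In particular, u_Aτ = uτ if and only if A is τ-dense in X. -/
open Filter Set Topology

variable {X : Type*} [Lattice X] [AddCommGroup X] [Module ℝ X]
  [CovariantClass X X (· + ·) (· ≤ ·)] [PosSMulMono ℝ X]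

lemma aux_sub_inf (b c : X) : b - b ⊓ c = (b - c) ⊔ 0 := by
  rw [sub_eq_add_neg, neg_inf, add_sup, add_neg_cancel, ← sub_eq_add_neg, sup_comm]

lemma aux_inf_add (u v a : X) (hu : 0 ≤ u) (hv : 0 ≤ v) (ha : 0 ≤ a) :
    (u + v) ⊓ a ≤ u ⊓ a + v ⊓ a := by
  have h1 : u ⊓ a + v ⊓ a = ((u + v) ⊓ (a + v)) ⊓ ((u + a) ⊓ (a + a)) := by
    rw [add_inf v a (u ⊓ a), inf_add u a v, inf_add u a a]
  rw [h1]
  refine le_inf (le_inf inf_le_left ?_) (le_inf ?_ ?_)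
  · exact inf_le_right.trans (le_add_of_nonneg_right hv)
  · exact inf_le_right.trans (le_add_of_nonneg_left hu)
  · exact inf_le_right.trans (le_add_of_nonneg_left ha)

lemma aux_key (x y : X) (hx : 0 ≤ x) (hy : 0 ≤ y) (n : ℕ) :
    (n + 1) • (((x - n • y) ⊔ 0) ⊓ y) ≤ x := by
  set z : X := ((x - n • y) ⊔ 0) ⊓ y with hz
  have key : ∀ k : ℕ, k ≤ n + 1 → k • z ≤ x := by
    intro k
    induction k with
    | zero => intro _; simpa using hx
    | succ k ih =>
      intro hk
      have ihx : k • z ≤ x := ih (by omega)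
      have hkz : k • z ≤ n • y := by
        calc k • z ≤ k • y := nsmul_le_nsmul_right inf_le_right k
        _ ≤ n • y := nsmul_le_nsmul_left hy (by omega)
      have h1 : z ≤ (x - k • z) ⊔ 0 :=
        inf_le_left.trans (sup_le_sup_right (sub_le_sub_left hkz x) 0)
      calc (k + 1) • z = k • z + z := by rw [succ_nsmul]
      _ ≤ k • z + ((x - k • z) ⊔ 0) := add_le_add le_rfl h1
      _ = (k • z + (x - k • z)) ⊔ (k • z + 0) := add_sup _ _ _
      _ = x ⊔ k • z := by rw [add_sub_cancel, add_zero]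
      _ ≤ x := sup_le le_rfl ihx
  exact key (n + 1) le_rfl

lemma aux_solid_half (τ : TopologicalSpace X) (hτ : IsLocallySolidTop τ) {U : Set X}
    (hU : U ∈ @nhds X τ 0) :
    ∃ V ∈ @nhds X τ 0, IsSolid V ∧ ∀ v ∈ V, ∀ w ∈ V, v + w ∈ U := by
  letI := τ; haveI := hτ.1
  obtain ⟨W, hW, hWU⟩ := exists_nhds_zero_half hU
  obtain ⟨V, hV, hVs, hVW⟩ := hτ.2.2 W hW
  exact ⟨V, hV, hVs, fun v hv w hw => hWU v (hVW hv) w (hVW hw)⟩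

lemma aux_mem_unb (τ : TopologicalSpace X) (hτ : IsLocallySolidTop τ) {A : Set X}
    (hA : IsOrderIdeal A) {s : Set X} :
    s ∈ unbNhdsZero τ A ↔
      ∃ a ∈ A, 0 ≤ a ∧ ∃ U ∈ @nhds X τ 0, IsSolid U ∧ {x : X | |x| ⊓ a ∈ U} ⊆ s := by
  have hdir : DirectedOn ((fun a => Filter.comap (fun x : X => |x| ⊓ a) (@nhds X τ 0)) ⁻¹'o
      (· ≥ ·)) {a : X | a ∈ A ∧ 0 ≤ a} := by
    rintro a ⟨haA, ha0⟩ b ⟨hbB, hb0⟩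
    have habA : a ⊔ b ∈ A := by
      refine hA.2.2.2 (hA.2.1 a haA b hbB) ?_
      rw [abs_of_nonneg (le_trans ha0 le_sup_left), abs_of_nonneg (add_nonneg ha0 hb0)]
      exact sup_le (le_add_of_nonneg_right hb0) (le_add_of_nonneg_left ha0)
    refine ⟨a ⊔ b, ⟨habA, le_trans ha0 le_sup_left⟩, ?_, ?_⟩ <;>
    · intro t ht
      obtain ⟨U, hU, hsub⟩ := Filter.mem_comap.mp ht
      obtain ⟨V, hV, hVs, hVU⟩ := hτ.2.2 U hU
      refine Filter.mem_comap.mpr ⟨V, hV, fun x hx => hsub ?_⟩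
      refine mem_preimage.mpr (hVU (hVs hx ?_))
      · rw [abs_of_nonneg (le_inf (abs_nonneg x) (by first | exact ha0 | exact hb0)),
          abs_of_nonneg (le_inf (abs_nonneg x) (le_trans ha0 le_sup_left))]
        exact inf_le_inf_left _ (by first | exact le_sup_left | exact le_sup_right)
  rw [unbNhdsZero, Filter.mem_biInf_of_directed hdir ⟨0, hA.1, le_rfl⟩]
  constructor
  · rintro ⟨a, ⟨haA, ha0⟩, ht⟩
    obtain ⟨U, hU, hsub⟩ := Filter.mem_comap.mp ht
    obtain ⟨V, hV, hVs, hVU⟩ := hτ.2.2 U hU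
    exact ⟨a, haA, ha0, V, hV, hVs, fun x hx => hsub (hVU hx)⟩
  · rintro ⟨a, haA, ha0, U, hU, _, hsub⟩
    exact ⟨a, ⟨haA, ha0⟩, Filter.mem_comap.mpr ⟨U, hU, hsub⟩⟩

lemma aux_nhds_unb (τ : TopologicalSpace X) (hτ : IsLocallySolidTop τ) {A : Set X}
    (hA : IsOrderIdeal A) (x : X) :
    @nhds X (unbTopology τ A) x = Filter.map (x + ·) (unbNhdsZero τ A) := by
  refine TopologicalSpace.nhds_mkOfNhds _ x ?_ ?_
  · intro y s hs
    rw [Filter.mem_map] at hs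
    obtain ⟨a, haA, ha0, U, hU, hUs, hsub⟩ := (aux_mem_unb τ hτ hA).mp hs
    have h0 : (0:X) ∈ {z : X | |z| ⊓ a ∈ U} := by
      simp only [mem_setOf_eq, abs_zero, inf_eq_left.mpr ha0]
      exact mem_of_mem_nhds hU
    simpa using hsub h0
  · intro y s hs
    rw [Filter.mem_map] at hs
    obtain ⟨a, haA, ha0, U, hU, hUs, hsub⟩ := (aux_mem_unb τ hτ hA).mp hs
    obtain ⟨V, hV, hVs, hVU⟩ := aux_solid_half τ hτ hU
    have key : ∀ w, |w| ⊓ a ∈ V → s ∈ Filter.map ((y + w) + ·) (unbNhdsZero τ A) := by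
      intro w hw
      rw [Filter.mem_map]
      refine (aux_mem_unb τ hτ hA).mpr ⟨a, haA, ha0, V, hV, hVs, fun z hz => ?_⟩
      have habs : |w + z| ≤ |w| + |z| := abs_add_le w z
      have h1 : |w + z| ⊓ a ≤ |w| ⊓ a + |z| ⊓ a :=
        le_trans (inf_le_inf_right a habs)
          (aux_inf_add _ _ _ (abs_nonneg w) (abs_nonneg z) ha0)
      have h2 : |w + z| ⊓ a ∈ U := by
        refine hUs (hVU _ hw _ hz) ?_
        rw [abs_of_nonneg (le_inf (abs_nonneg _) ha0),
          abs_of_nonneg (add_nonneg (le_inf (abs_nonneg _) ha0) (le_inf (abs_nonneg _) ha0))]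
        exact h1
      have h3 := hsub h2
      simpa [add_assoc] using h3
    have hset : {z : X | |z| ⊓ a ∈ V} ⊆ (fun w => y + w) ⁻¹' {u : X | s ∈ Filter.map (u + ·) (unbNhdsZero τ A)} :=
      fun w hw => key w hw
    exact Filter.mem_map.mpr (Filter.mem_of_superset
      ((aux_mem_unb τ hτ hA).mpr ⟨a, haA, ha0, V, hV, hVs, subset_rfl⟩) hset)

lemma aux_mem_closure (τ : TopologicalSpace X) (hτ : IsLocallySolidTop τ) (A : Set X) (b : X) :
    b ∈ @closure X τ A ↔ ∀ U ∈ @nhds X τ 0, ∃ a ∈ A, b - a ∈ U := by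
  letI := τ; haveI := hτ.1
  rw [mem_closure_iff_nhds]
  constructor
  · intro h U hU
    have ht : (fun y => b - y) ⁻¹' U ∈ 𝓝 b := by
      have hc : Continuous fun y : X => b - y := continuous_const.sub continuous_id
      have : Filter.Tendsto (fun y => b - y) (𝓝 b) (𝓝 (0:X)) := by
        simpa using hc.tendsto b
      exact this hU
    obtain ⟨a, hat, haA⟩ := h _ ht
    exact ⟨a, haA, hat⟩
  · intro h t ht
    have hU : (fun y => b - y) ⁻¹' t ∈ 𝓝 (0:X) := by
      have hc : Continuous fun y : X => b - y := continuous_const.sub continuous_id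
      have : Filter.Tendsto (fun y : X => b - y) (𝓝 0) (𝓝 b) := by
        simpa using hc.tendsto (0:X)
      exact this ht
    obtain ⟨a, haA, hau⟩ := h _ hU
    refine ⟨a, ?_, haA⟩
    simpa using hau

lemma aux_le_of_subset_closure (τ : TopologicalSpace X) (hτ : IsLocallySolidTop τ)
    {A B : Set X} (hA : IsOrderIdeal A) (hB : IsOrderIdeal B)
    (hBA : B ⊆ @closure X τ A) : unbNhdsZero τ A ≤ unbNhdsZero τ B := by
  intro s hs
  obtain ⟨b, hbB, hb0, U, hU, hUs, hsub⟩ := (aux_mem_unb τ hτ hB).mp hs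
  obtain ⟨V, hV, hVs, hVU⟩ := aux_solid_half τ hτ hU
  obtain ⟨a₀, ha₀A, ha₀V⟩ := (aux_mem_closure τ hτ A b).mp (hBA hbB) V hV
  have haA : |a₀| ∈ A := hA.2.2.2 ha₀A (by rw [abs_abs])
  refine (aux_mem_unb τ hτ hA).mpr ⟨|a₀|, haA, abs_nonneg a₀, V, hV, hVs,
    fun x hx => hsub ?_⟩
  have hd : |(|x| ⊓ b) - (|x| ⊓ |a₀|)| ≤ |b - a₀| := by
    have h1 : |(b ⊓ |x|) - ((|a₀|) ⊓ |x|)| ≤ abs (b - abs a₀) := abs_inf_sub_inf_le_abs b (|a₀|) (|x|)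
    rw [inf_comm b, inf_comm (|a₀|)] at h1
    refine h1.trans ?_
    have h2 : abs ((|b|) - (|a₀|)) ≤ |b - a₀| := abs_abs_sub_abs_le b a₀
    rwa [abs_of_nonneg hb0] at h2
  have hdV : (|x| ⊓ b) - (|x| ⊓ |a₀|) ∈ V := hVs ha₀V hd
  have : (|x| ⊓ |a₀|) + ((|x| ⊓ b) - (|x| ⊓ |a₀|)) ∈ U := hVU _ hx _ hdV
  simpa using this

lemma aux_subset_closure_of_le (τ : TopologicalSpace X) (hτ : IsLocallySolidTop τ)
    {A B : Set X} (hA : IsOrderIdeal A) (hB : IsOrderIdeal B)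
    (h : unbNhdsZero τ A ≤ unbNhdsZero τ B) : B ⊆ @closure X τ A := by
  letI := τ; haveI := hτ.1; haveI := hτ.2.1
  have hpos : ∀ b ∈ B, 0 ≤ b → b ∈ closure A := by
    intro b hbB hb0
    rw [aux_mem_closure τ hτ A b]
    intro U hU
    obtain ⟨V, hV, hVs, hVU⟩ := hτ.2.2 U hU
    have hS : {x : X | |x| ⊓ b ∈ V} ∈ unbNhdsZero τ B :=
      (aux_mem_unb τ hτ hB).mpr ⟨b, hbB, hb0, V, hV, hVs, subset_rfl⟩
    obtain ⟨a, haA, ha0, U', hU', hU's, hsub⟩ := (aux_mem_unb τ hτ hA).mp (h hS)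
    -- the truncations b ⊓ (n • a) belong to A and approximate b
    have htend : Filter.Tendsto (fun n : ℕ => ((n:ℝ)+1)⁻¹ • b) Filter.atTop (𝓝 (0:X)) := by
      have h1 : Filter.Tendsto (fun n : ℕ => ((n:ℝ)+1)⁻¹) Filter.atTop (𝓝 (0:ℝ)) :=
        tendsto_one_div_add_atTop_nhds_zero_nat.congr (by simp [one_div])
      simpa using h1.smul_const b
    obtain ⟨n, hn⟩ := (htend.eventually_mem hU').exists
    set z : X := ((b - n • a) ⊔ 0) ⊓ a with hzdef
    have hz0 : 0 ≤ z := le_inf le_sup_right ha0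
    have hzb : z ≤ ((n:ℝ)+1)⁻¹ • b := by
      have hkey : (n + 1) • z ≤ b := aux_key b a hb0 ha0 n
      have h2 : ((n:ℝ)+1)⁻¹ • ((n+1) • z) ≤ ((n:ℝ)+1)⁻¹ • b :=
        smul_le_smul_of_nonneg_left hkey (by positivity)
      have h3 : ((n:ℝ)+1)⁻¹ • ((n+1) • z) = z := by
        rw [← Nat.cast_smul_eq_nsmul ℝ (n+1) z, smul_smul]
        push_cast
        rw [inv_mul_cancel₀ (by positivity), one_smul]
      rwa [h3] at h2
    have hzU' : z ∈ U' := by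
      refine hU's hn ?_
      rw [abs_of_nonneg hz0, abs_of_nonneg (smul_nonneg (by positivity) hb0)]
      exact hzb
    set bn : X := b ⊓ (n • a) with hbndef
    have hbnA : bn ∈ A := by
      have hna : (n • a : X) ∈ A := by
        have := hA.2.2.1 (n : ℝ) a haA
        rwa [Nat.cast_smul_eq_nsmul ℝ n a] at this
      refine hA.2.2.2 hna ?_
      have hbn0 : 0 ≤ bn := le_inf hb0 (nsmul_nonneg ha0 n)
      rw [abs_of_nonneg hbn0, abs_of_nonneg (nsmul_nonneg ha0 n)]
      exact inf_le_right
    have hdn0 : 0 ≤ b - bn := sub_nonneg.mpr inf_le_left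
    have hdnb : b - bn ≤ b := sub_le_self b (le_inf hb0 (nsmul_nonneg ha0 n))
    have hdz : |b - bn| ⊓ a = z := by
      rw [abs_of_nonneg hdn0, hbndef, aux_sub_inf]
    have hmem : b - bn ∈ {x : X | |x| ⊓ b ∈ V} := hsub (by rw [mem_setOf_eq, hdz]; exact hzU')
    have : |b - bn| ⊓ b = b - bn := by
      rw [abs_of_nonneg hdn0]
      exact inf_eq_left.mpr hdnb
    rw [mem_setOf_eq, this] at hmem
    exact ⟨bn, hbnA, hVU hmem⟩
  -- general case via positive and negative parts
  have hsubcl : ∀ u v : X, u ∈ closure A → v ∈ closure A → u - v ∈ closure A := by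
    intro u v hu hv
    rw [aux_mem_closure τ hτ] at *
    intro U hU
    obtain ⟨V, hV, hVs, hVU⟩ := aux_solid_half τ hτ hU
    obtain ⟨a₁, ha₁A, ha₁⟩ := hu V hV
    obtain ⟨a₂, ha₂A, ha₂⟩ := hv V hV
    have haA : a₁ - a₂ ∈ A := by
      have := hA.2.1 a₁ ha₁A ((-1:ℝ) • a₂) (hA.2.2.1 (-1) a₂ ha₂A)
      rwa [neg_one_smul, ← sub_eq_add_neg] at this
    refine ⟨a₁ - a₂, haA, ?_⟩
    have hneg : -(v - a₂) ∈ V := hVs ha₂ (by rw [abs_neg])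
    have := hVU _ ha₁ _ hneg
    have heq : (u - a₁) + -(v - a₂) = u - v - (a₁ - a₂) := by abel
    rwa [heq] at this
  intro b hbB
  have hbp : b ⊔ 0 ∈ closure A := by
    refine hpos _ (hB.2.2.2 hbB ?_) le_sup_right
    rw [abs_of_nonneg (le_sup_right : (0:X) ≤ b ⊔ 0)]
    exact sup_le (le_abs_self b) (abs_nonneg b)
  have hbm : (-b) ⊔ 0 ∈ closure A := by
    refine hpos _ (hB.2.2.2 hbB ?_) le_sup_right
    rw [abs_of_nonneg (le_sup_right : (0:X) ≤ (-b) ⊔ 0)]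
    exact sup_le (neg_le_abs b) (abs_nonneg b)
  have heq : (b ⊔ 0) - ((-b) ⊔ 0) = b := by
    have h1 : (b ⊓ 0) + (b ⊔ 0) = b + 0 := inf_add_sup b 0
    have h2 : (-b) ⊔ 0 = -(b ⊓ 0) := by rw [neg_inf, neg_zero]
    rw [h2, sub_neg_eq_add, add_comm, h1, add_zero]
  rw [← heq]
  exact hsubcl _ _ hbp hbm

lemma aux_main (τ : TopologicalSpace X) (hτ : IsLocallySolidTop τ)
    {A B : Set X} (hA : IsOrderIdeal A) (hB : IsOrderIdeal B) :
    unbTopology τ A = unbTopology τ B ↔ @closure X τ A = @closure X τ B := by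
  letI := τ
  constructor
  · intro h
    have h1 := aux_nhds_unb τ hτ hA 0
    have h2 := aux_nhds_unb τ hτ hB 0
    rw [h, h2] at h1
    have hid : (fun y : X => (0:X) + y) = id := funext fun y => zero_add y
    rw [hid, Filter.map_id, Filter.map_id] at h1
    have hsub1 : B ⊆ closure A := aux_subset_closure_of_le τ hτ hA hB h1.ge
    have hsub2 : A ⊆ closure B := aux_subset_closure_of_le τ hτ hB hA h1.le
    exact le_antisymm (closure_minimal hsub2 isClosed_closure)
      (closure_minimal hsub1 isClosed_closure)
  · intro h
    have e1 : unbNhdsZero τ A ≤ unbNhdsZero τ B :=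
      aux_le_of_subset_closure τ hτ hA hB (h ▸ subset_closure)
    have e2 : unbNhdsZero τ B ≤ unbNhdsZero τ A :=
      aux_le_of_subset_closure τ hτ hB hA (h ▸ subset_closure)
    have hF : unbNhdsZero τ A = unbNhdsZero τ B := le_antisymm e1 e2
    unfold unbTopology
    rw [hF]


/-- `u_A τ = u_B τ` iff the `τ`-closures of `A` and `B` agree; in
particular `u_A τ = u τ` iff `A` is `τ`-dense. -/
theorem stmt3 (hArch : VLArchimedean X) (τ : TopologicalSpace X) (hτ : IsLocallySolidTop τ)
    (A B : Set X) (hA : IsOrderIdeal A) (hB : IsOrderIdeal B) :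
    (unbTopology τ A = unbTopology τ B ↔ @closure X τ A = @closure X τ B) ∧
      (unbTopology τ A = unbTopology τ Set.univ ↔ @closure X τ A = Set.univ) := by
  letI := τ
  have huniv : IsOrderIdeal (Set.univ : Set X) :=
    ⟨trivial, fun _ _ _ _ => trivial, fun _ _ _ => trivial, fun _ _ _ _ => trivial⟩
  refine ⟨aux_main τ hτ hA hB, ?_⟩
  rw [aux_main τ hτ hA huniv, closure_univ]
end

section
/- Let (X,τ) be a Hausdorff locally solid vector lattice and (e_n) a positive increasing sequence in X. The following are equivalent: (i) the τ-closure of the ideal generated by {e_n : n ∈ ℕ} is all of X; (ii) for every sequence (x_k) in X_+, if x_k ∧ e_n → 0 in τ as k → ∞ for every n, then x_k → 0 in uτ. -/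
open Filter Set Topology

variable {X : Type*} [Lattice X] [AddCommGroup X] [Module ℝ X]
  [CovariantClass X X (· + ·) (· ≤ ·)] [PosSMulMono ℝ X]

set_option linter.unusedSectionVars false
set_option maxHeartbeats 1000000

section Aux

lemma aux_inf_add_le {a b c : X} (hc : 0 ≤ c) : a ⊓ (b + c) ≤ a ⊓ b + c := by
  rw [inf_add]
  exact inf_le_inf_right _ (le_add_of_nonneg_right hc)

lemma aux_inf_add_le₂ {a b c : X} (ha : 0 ≤ a) (hb : 0 ≤ b) (hc : 0 ≤ c) :
    a ⊓ (b + c) ≤ a ⊓ b + a ⊓ c := by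
  rw [← sub_le_iff_le_add', sub_inf]
  refine sup_le ?_ ?_
  · exact le_trans (sub_nonpos.2 inf_le_left) (le_inf ha hc)
  · refine le_inf ?_ ?_
    · rw [sub_le_iff_le_add]
      exact inf_le_left.trans (le_add_of_nonneg_right hb)
    · rw [sub_le_iff_le_add, add_comm]
      exact inf_le_right

lemma aux_inf_nsmul_le {a b : X} (ha : 0 ≤ a) (hb : 0 ≤ b) :
    ∀ m : ℕ, a ⊓ (m • b) ≤ m • (a ⊓ b) := by
  intro m
  induction m with
  | zero => simp [inf_eq_right.2 ha]
  | succ m ih =>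
    rw [succ_nsmul, succ_nsmul]
    calc a ⊓ (m • b + b) ≤ a ⊓ (m • b) + a ⊓ b :=
          aux_inf_add_le₂ ha (nsmul_nonneg hb m) hb
      _ ≤ m • (a ⊓ b) + a ⊓ b := add_le_add_left ih _

lemma aux_nsmul_trunc_le {u b : X} (hu : 0 ≤ u) (hb : 0 ≤ b) (k : ℕ) :
    k • ((u - k • b)⁺ ⊓ b) ≤ u := by
  set s := (u - k • b)⁺ ⊓ b with hs
  have hs0 : 0 ≤ s := le_inf (posPart_nonneg _) hb
  have hsb : s ≤ b := inf_le_right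
  have h1 : s ≤ (u - k • s)⁺ :=
    inf_le_left.trans (posPart_mono (sub_le_sub_left (nsmul_le_nsmul_right hsb k) u))
  have hdisj : s ⊓ (k • s - u)⁺ = 0 := by
    refine le_antisymm ?_ (le_inf hs0 (posPart_nonneg _))
    calc s ⊓ (k • s - u)⁺ ≤ (u - k • s)⁺ ⊓ (k • s - u)⁺ := inf_le_inf_right _ h1
      _ = (u - k • s)⁺ ⊓ (u - k • s)⁻ := by rw [← neg_sub u (k • s), posPart_neg]
      _ = 0 := posPart_inf_negPart_eq_zero _
  have h3 : (k • s - u)⁺ ≤ k • s :=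
    sup_le (sub_le_self _ hu) (nsmul_nonneg hs0 k)
  have h2 : (k • s - u)⁺ ≤ 0 := by
    calc (k • s - u)⁺ = (k • s - u)⁺ ⊓ (k • s) := (inf_eq_left.2 h3).symm
      _ ≤ k • ((k • s - u)⁺ ⊓ s) := aux_inf_nsmul_le (posPart_nonneg _) hs0 k
      _ = 0 := by rw [inf_comm, hdisj, smul_zero]
  have h4 : k • s - u ≤ 0 := posPart_eq_zero.1 (le_antisymm h2 (posPart_nonneg _))
  exact sub_nonpos.1 h4

lemma aux_smul_le_smul_right {a b : ℝ} (h : a ≤ b) {x : X} (hx : 0 ≤ x) :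
    a • x ≤ b • x := by
  have h0 : 0 ≤ (b - a) • x := smul_nonneg (sub_nonneg.2 h) hx
  calc a • x = a • x + 0 := (add_zero _).symm
    _ ≤ a • x + (b - a) • x := add_le_add_right h0 _
    _ = b • x := by rw [← add_smul]; ring_nf

lemma aux_smul_le_abs (c : ℝ) (y : X) : c • y ≤ |c| • |y| := by
  rcases le_or_gt 0 c with hc | hc
  · rw [abs_of_nonneg hc]
    exact smul_le_smul_of_nonneg_left (le_abs_self y) hc
  · rw [abs_of_neg hc]
    calc c • y = (-c) • (-y) := by rw [neg_smul_neg]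
      _ ≤ (-c) • |y| := smul_le_smul_of_nonneg_left (neg_le_abs y) (by linarith)

lemma aux_abs_smul_le (c : ℝ) (y : X) : |c • y| ≤ |c| • |y| := by
  refine sup_le (aux_smul_le_abs c y) ?_
  calc -(c • y) = (-c) • y := (neg_smul c y).symm
    _ ≤ |(-c)| • |y| := aux_smul_le_abs (-c) y
    _ = |c| • |y| := by rw [abs_neg]

lemma aux_mem_ideal_bound {e : ℕ → X} (he : ∀ n, 0 ≤ e n) (hmono : Monotone e) {y : X}
    (hy : y ∈ idealGenerated (Set.range e)) : ∃ n m : ℕ, |y| ≤ m • e n := by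
  set J : Set X := {y : X | ∃ n m : ℕ, |y| ≤ m • e n} with hJ
  refine hy J ⟨⟨⟨0, 0, by simp⟩, ?_, ?_, ?_⟩, ?_⟩
  · rintro x ⟨n₁, m₁, h₁⟩ z ⟨n₂, m₂, h₂⟩
    refine ⟨max n₁ n₂, m₁ + m₂, (abs_add_le x z).trans ?_⟩
    rw [add_nsmul]
    exact add_le_add (h₁.trans (nsmul_le_nsmul_right (hmono (le_max_left _ _)) m₁))
      (h₂.trans (nsmul_le_nsmul_right (hmono (le_max_right _ _)) m₂))
  · rintro c x ⟨n, m, h⟩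
    refine ⟨n, ⌈|c| * m⌉₊, ?_⟩
    calc |c • x| ≤ |c| • |x| := aux_abs_smul_le c x
      _ ≤ |c| • (m • e n) := smul_le_smul_of_nonneg_left h (abs_nonneg c)
      _ = (|c| * m) • e n := by
          rw [← Nat.cast_smul_eq_nsmul ℝ m (e n), smul_smul]
      _ ≤ ((⌈|c| * m⌉₊ : ℕ) : ℝ) • e n :=
          aux_smul_le_smul_right (Nat.le_ceil _) (he n)
      _ = (⌈|c| * m⌉₊ : ℕ) • e n := Nat.cast_smul_eq_nsmul ℝ _ _
  · rintro x z ⟨n, m, h⟩ hzx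
    exact ⟨n, m, hzx.trans h⟩
  · rintro _ ⟨n, rfl⟩
    exact ⟨n, 1, by rw [abs_of_nonneg (he n), one_nsmul]⟩

variable {τ : TopologicalSpace X}

lemma aux_exists_solid_half (hτ : IsLocallySolidTop τ) {U : Set X} (hU : U ∈ @nhds X τ 0) :
    ∃ W ∈ @nhds X τ 0, IsSolid W ∧ W ⊆ U ∧ ∀ v ∈ W, ∀ w ∈ W, v + w ∈ U := by
  letI := τ; haveI := hτ.1
  obtain ⟨V, hV, hVU⟩ := exists_nhds_zero_half hU
  obtain ⟨W, hW, hWs, hWV⟩ := hτ.2.2 V hV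
  have h0 : (0 : X) ∈ W := mem_of_mem_nhds hW
  refine ⟨W, hW, hWs, fun v hv => ?_, fun v hv w hw => hVU _ (hWV hv) _ (hWV hw)⟩
  simpa using hVU _ (hWV hv) _ (hWV h0)

lemma aux_comap_le (hτ : IsLocallySolidTop τ) {a b : X} (ha : 0 ≤ a) (hab : a ≤ b) :
    Filter.comap (fun x : X => |x| ⊓ b) (@nhds X τ 0) ≤
      Filter.comap (fun x : X => |x| ⊓ a) (@nhds X τ 0) := by
  intro s hs
  obtain ⟨U, hU, hUs⟩ := hs
  obtain ⟨V, hV, hVs, hVU⟩ := hτ.2.2 U hU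
  refine ⟨V, hV, fun x hx => ?_⟩
  refine hUs (hVU (hVs hx ?_))
  rw [abs_of_nonneg (le_inf (abs_nonneg x) ha),
    abs_of_nonneg (le_inf (abs_nonneg x) (ha.trans hab))]
  exact inf_le_inf_left _ hab

lemma aux_mem_unbNhds (hτ : IsLocallySolidTop τ) {s : Set X} :
    s ∈ unbNhdsZero τ Set.univ ↔
      ∃ a : X, 0 ≤ a ∧ ∃ U ∈ @nhds X τ 0, {x : X | |x| ⊓ a ∈ U} ⊆ s := by
  rw [unbNhdsZero, iInf_subtype']
  haveI : Nonempty {a : X // a ∈ {a ∈ Set.univ | 0 ≤ a}} := ⟨⟨0, by simp⟩⟩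
  rw [Filter.mem_iInf_of_directed]
  · constructor
    · rintro ⟨⟨a, hamem⟩, hs⟩
      obtain ⟨U, hU, hUs⟩ := Filter.mem_comap.1 hs
      exact ⟨a, hamem.2, U, hU, hUs⟩
    · rintro ⟨a, ha, U, hU, hUs⟩
      exact ⟨⟨a, trivial, ha⟩, Filter.mem_comap.2 ⟨U, hU, hUs⟩⟩
  · rintro ⟨a, hamem⟩ ⟨b, hbmem⟩
    refine ⟨⟨a ⊔ b, trivial, hamem.2.trans le_sup_left⟩, ?_, ?_⟩
    · exact aux_comap_le hτ hamem.2 le_sup_left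
    · exact aux_comap_le hτ hbmem.2 le_sup_right

lemma aux_basic_mem (hτ : IsLocallySolidTop τ) {a : X} (ha : 0 ≤ a) {U : Set X}
    (hU : U ∈ @nhds X τ 0) : {x : X | |x| ⊓ a ∈ U} ∈ unbNhdsZero τ Set.univ :=
  (aux_mem_unbNhds hτ).2 ⟨a, ha, U, hU, subset_rfl⟩

lemma aux_half_unb (hτ : IsLocallySolidTop τ) {s : Set X}
    (hs : s ∈ unbNhdsZero τ Set.univ) :
    ∃ t ∈ unbNhdsZero τ Set.univ, t ⊆ s ∧ ∀ v ∈ t, ∀ w ∈ t, v + w ∈ s := by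
  obtain ⟨a, ha, U₀, hU₀, hU₀s⟩ := (aux_mem_unbNhds hτ).1 hs
  obtain ⟨U, hU, hUsolid, hUU₀⟩ := hτ.2.2 U₀ hU₀
  obtain ⟨W, hW, hWsolid, hWU, hWhalf⟩ := aux_exists_solid_half hτ hU
  refine ⟨{x : X | |x| ⊓ a ∈ W}, aux_basic_mem hτ ha hW,
    fun x hx => hU₀s (hUU₀ (hWU hx)), fun v hv w hw => ?_⟩
  have h1 : |v + w| ⊓ a ≤ |v| ⊓ a + |w| ⊓ a := by
    calc |v + w| ⊓ a ≤ (|v| + |w|) ⊓ a := inf_le_inf_right _ (abs_add_le v w)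
      _ = a ⊓ (|v| + |w|) := inf_comm _ _
      _ ≤ a ⊓ |v| + a ⊓ |w| := aux_inf_add_le₂ ha (abs_nonneg v) (abs_nonneg w)
      _ = |v| ⊓ a + |w| ⊓ a := by rw [inf_comm a, inf_comm a]
  have hmem : |v| ⊓ a + |w| ⊓ a ∈ U := hWhalf _ hv _ hw
  have h2 : |(|v + w| ⊓ a)| ≤ |(|v| ⊓ a + |w| ⊓ a)| := by
    rw [abs_of_nonneg (le_inf (abs_nonneg _) ha), abs_of_nonneg
      (add_nonneg (le_inf (abs_nonneg _) ha) (le_inf (abs_nonneg _) ha))]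
    exact h1
  exact hU₀s (hUU₀ (hUsolid hmem h2))

lemma aux_pure_le (hτ : IsLocallySolidTop τ) :
    (pure (0 : X) : Filter X) ≤ unbNhdsZero τ Set.univ := by
  refine le_iInf fun a => le_iInf fun hamem => ?_
  rw [← Filter.map_le_iff_le_comap, Filter.map_pure]
  have : |(0 : X)| ⊓ a = 0 := by
    rw [abs_zero, inf_eq_left.2 hamem.2]
  rw [this]
  exact pure_le_nhds 0

lemma aux_unb_nhds_eq (hτ : IsLocallySolidTop τ) (x : X) :
    @nhds X (unbTopology τ Set.univ) x = Filter.map (x + ·) (unbNhdsZero τ Set.univ) := by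
  refine TopologicalSpace.nhds_mkOfNhds _ _ (fun z => ?_) (fun z s hs => ?_)
  · calc (pure z : Filter X) = Filter.map (z + ·) (pure 0) := by
          rw [Filter.map_pure, add_zero]
      _ ≤ Filter.map (z + ·) (unbNhdsZero τ Set.univ) :=
          Filter.map_mono (aux_pure_le hτ)
  · rw [Filter.mem_map] at hs
    obtain ⟨t, ht, hts, hadd⟩ := aux_half_unb hτ hs
    rw [Filter.eventually_iff, Filter.mem_map]
    have : t ⊆ (z + ·) ⁻¹' {y | s ∈ Filter.map (y + ·) (unbNhdsZero τ Set.univ)} := by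
      intro v hv
      rw [Set.mem_preimage, Set.mem_setOf_eq, Filter.mem_map]
      refine Filter.mem_of_superset ht fun w hw => ?_
      have : z + (v + w) ∈ s := hadd v hv w hw
      simpa [add_assoc] using this
    exact Filter.mem_of_superset ht this

lemma aux_unb_nhds_zero (hτ : IsLocallySolidTop τ) :
    @nhds X (unbTopology τ Set.univ) 0 = unbNhdsZero τ Set.univ := by
  rw [aux_unb_nhds_eq hτ]
  have : ((0 : X) + ·) = id := by funext y; simp
  rw [this, Filter.map_id]

lemma aux_tendsto_unb {ι : Type*} {l : Filter ι} {f : ι → X} (hτ : IsLocallySolidTop τ) :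
    Filter.Tendsto f l (@nhds X (unbTopology τ Set.univ) 0) ↔
      ∀ a : X, 0 ≤ a → Filter.Tendsto (fun k => |f k| ⊓ a) l (@nhds X τ 0) := by
  rw [aux_unb_nhds_zero hτ, unbNhdsZero]
  simp only [Filter.tendsto_iInf, Filter.tendsto_comap_iff]
  constructor
  · intro h a ha
    exact h a ⟨trivial, ha⟩
  · intro h a hamem
    exact h a hamem.2

lemma aux_squeeze {ι : Type*} {l : Filter ι} {f g : ι → X} (hτ : IsLocallySolidTop τ)
    (h0 : ∀ᶠ k in l, 0 ≤ f k) (hle : ∀ᶠ k in l, f k ≤ g k)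
    (hg : Filter.Tendsto g l (@nhds X τ 0)) : Filter.Tendsto f l (@nhds X τ 0) := by
  rw [Filter.tendsto_def]
  intro s hs
  obtain ⟨V, hV, hVs, hVsub⟩ := hτ.2.2 s hs
  filter_upwards [h0, hle, Filter.tendsto_def.1 hg V hV] with k hk0 hkle hkV
  refine hVsub (hVs hkV ?_)
  rw [abs_of_nonneg hk0, abs_of_nonneg (hk0.trans hkle)]
  exact hkle

end Aux

/-- for a positive increasing sequence `(e n)`, the ideal generated by the
`e n` is `τ`-dense iff every positive sequence `x` with `x k ⊓ e n → 0` in `τ` for all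
`n` is `u τ`-null. -/
theorem stmt7 (hArch : VLArchimedean X) (τ : TopologicalSpace X)
    (hτ : IsLocallySolidTop τ) (hT2 : @T2Space X τ)
    (e : ℕ → X) (he : ∀ n, 0 ≤ e n) (hmono : Monotone e) :
    @closure X τ (idealGenerated (Set.range e)) = Set.univ ↔
      ∀ x : ℕ → X, (∀ k, 0 ≤ x k) →
        (∀ n, Filter.Tendsto (fun k => x k ⊓ e n) Filter.atTop (@nhds X τ 0)) →
        Filter.Tendsto x Filter.atTop (@nhds X (unbTopology τ Set.univ) 0) := by
  constructor
  · intro hcl x hx hxe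
    rw [aux_tendsto_unb hτ]
    intro a ha
    have habs : (fun k => |x k| ⊓ a) = fun k => x k ⊓ a := by
      funext k; rw [abs_of_nonneg (hx k)]
    rw [habs, Filter.tendsto_def]
    intro U₀ hU₀
    obtain ⟨U, hU, hUsolid, hUU₀⟩ := hτ.2.2 U₀ hU₀
    obtain ⟨W, hW, hWsolid, hWU, hWhalf⟩ := aux_exists_solid_half hτ hU
    have hamem : a ∈ @closure X τ (idealGenerated (Set.range e)) := by rw [hcl]; trivial
    letI := τ; haveI := hτ.1; haveI := hτ.2.1
    have hsub : Filter.Tendsto (fun z : X => z - a) (nhds a) (nhds 0) := by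
      have hcont : Continuous (fun z : X => z - a) := continuous_id.sub continuous_const
      simpa using hcont.tendsto a
    have hpre : (fun z : X => z - a) ⁻¹' W ∈ nhds a := hsub hW
    obtain ⟨y, hyW, hymem⟩ := mem_closure_iff_nhds.1 hamem _ hpre
    obtain ⟨n, m, hym⟩ := aux_mem_ideal_bound he hmono hymem
    have haw : |a - y| ∈ W := by
      refine hWsolid hyW ?_
      rw [abs_abs, abs_sub_comm]
    have hm : Filter.Tendsto (fun k => m • (x k ⊓ e n)) atTop (nhds 0) := by
      have h1 := Filter.Tendsto.const_smul (hxe n) (m : ℝ)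
      rw [smul_zero] at h1
      have heq : (fun k => (m : ℝ) • (x k ⊓ e n)) = fun k => m • (x k ⊓ e n) := by
        funext k; exact Nat.cast_smul_eq_nsmul ℝ m _
      rwa [heq] at h1
    filter_upwards [Filter.tendsto_def.1 hm W hW] with k hkW
    have hb : x k ⊓ a ≤ m • (x k ⊓ e n) + |a - y| := by
      have h1 : a ≤ |y| + |a - y| := by
        calc a = y + (a - y) := by abel
          _ ≤ |y| + |a - y| := add_le_add (le_abs_self y) (le_abs_self _)
      calc x k ⊓ a ≤ x k ⊓ (|y| + |a - y|) := inf_le_inf_left _ h1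
        _ ≤ x k ⊓ |y| + |a - y| := aux_inf_add_le (abs_nonneg _)
        _ ≤ x k ⊓ (m • e n) + |a - y| := add_le_add_left (inf_le_inf_left _ hym) _
        _ ≤ m • (x k ⊓ e n) + |a - y| :=
            add_le_add_left (aux_inf_nsmul_le (hx k) (he n) m) _
    have hxk0 : 0 ≤ x k ⊓ a := le_inf (hx k) ha
    have hsum : m • (x k ⊓ e n) + |a - y| ∈ U := hWhalf _ hkW _ haw
    refine Set.mem_preimage.2 (hUU₀ (hUsolid hsum ?_))
    rw [abs_of_nonneg hxk0, abs_of_nonneg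
      (add_nonneg (nsmul_nonneg (le_inf (hx k) (he n)) m) (abs_nonneg _))]
    exact hb
  · intro h
    letI := τ; haveI := hτ.1; haveI := hτ.2.1
    have key : ∀ u : X, 0 ≤ u → u ∈ closure (idealGenerated (Set.range e)) := by
      intro u hu
      set x : ℕ → X := fun k => (u - k • e k)⁺ with hxdef
      have hx : ∀ k, 0 ≤ x k := fun k => posPart_nonneg _
      have hxen : ∀ n, Filter.Tendsto (fun k => x k ⊓ e n) atTop (nhds 0) := by
        intro n
        have hg : Filter.Tendsto (fun k : ℕ => ((k : ℝ))⁻¹ • u) atTop (nhds 0) := by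
          have h1 : Filter.Tendsto (fun k : ℕ => ((k : ℝ))⁻¹) atTop (nhds 0) :=
            tendsto_inv_atTop_zero.comp tendsto_natCast_atTop_atTop
          have h2 := h1.smul_const u
          rwa [zero_smul] at h2
        refine aux_squeeze hτ
          (Filter.Eventually.of_forall fun k => le_inf (hx k) (he n)) ?_ hg
        filter_upwards [Filter.eventually_ge_atTop (max n 1)] with k hk
        have hkn : n ≤ k := le_trans (le_max_left _ _) hk
        have hk1 : 1 ≤ k := le_trans (le_max_right _ _) hk
        have h1 : x k ⊓ e n ≤ (u - k • e n)⁺ ⊓ e n :=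
          inf_le_inf_right _
            (posPart_mono (sub_le_sub_left (nsmul_le_nsmul_right (hmono hkn) k) u))
        have h2 : k • (x k ⊓ e n) ≤ u :=
          (nsmul_le_nsmul_right h1 k).trans (aux_nsmul_trunc_le hu (he n) k)
        have hkpos : (0 : ℝ) < (k : ℝ) := by exact_mod_cast hk1
        calc x k ⊓ e n = ((k : ℝ))⁻¹ • ((k : ℝ) • (x k ⊓ e n)) := by
              rw [smul_smul, inv_mul_cancel₀ (ne_of_gt hkpos), one_smul]
          _ = ((k : ℝ))⁻¹ • (k • (x k ⊓ e n)) := by rw [Nat.cast_smul_eq_nsmul]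
          _ ≤ ((k : ℝ))⁻¹ • u := smul_le_smul_of_nonneg_left h2 (inv_nonneg.2 hkpos.le)
      have hten := (aux_tendsto_unb hτ).1 (h x hx hxen) u hu
      have hxu : (fun k => |x k| ⊓ u) = x := by
        funext k
        rw [abs_of_nonneg (hx k), inf_eq_left.2 ?_]
        calc x k ≤ u⁺ := posPart_mono (sub_le_self u (nsmul_nonneg (he k) k))
          _ = u := posPart_eq_self.2 hu
      rw [hxu] at hten
      have hlim : Filter.Tendsto (fun k => u - x k) atTop (nhds u) := by
        have h2 : Filter.Tendsto (fun k => u - x k) atTop (nhds (u - 0)) :=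
          (tendsto_const_nhds (x := u)).sub hten
        simpa using h2
      refine mem_closure_of_tendsto hlim (Filter.Eventually.of_forall fun k => ?_)
      have hid : u - x k = u ⊓ (k • e k) := by
        show u - ((u - k • e k) ⊔ 0) = _
        rw [sub_sup, sub_sub_cancel, sub_zero, inf_comm]
      rw [hid]
      refine Set.mem_sInter.2 fun I hI => ?_
      have heI : e k ∈ I := hI.2 ⟨k, rfl⟩
      have hkeI : (k : ℝ) • e k ∈ I := hI.1.2.2.1 (k : ℝ) _ heI
      have hkeI' : k • e k ∈ I := by rwa [Nat.cast_smul_eq_nsmul] at hkeI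
      refine hI.1.2.2.2 hkeI' ?_
      rw [abs_of_nonneg (le_inf hu (nsmul_nonneg (he k) k)),
        abs_of_nonneg (nsmul_nonneg (he k) k)]
      exact inf_le_right
    rw [Set.eq_univ_iff_forall]
    intro u
    let G : AddSubgroup X :=
      { carrier := idealGenerated (Set.range e)
        zero_mem' := fun I hI => hI.1.1
        add_mem' := fun {p q} hp hq I hI => hI.1.2.1 p (hp I hI) q (hq I hI)
        neg_mem' := fun {p} hp I hI => by
          have h2 := hI.1.2.2.1 (-1 : ℝ) p (hp I hI)
          rwa [neg_one_smul] at h2 }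
    have hp : u⁺ ∈ G.topologicalClosure := key u⁺ (posPart_nonneg u)
    have hq : u⁻ ∈ G.topologicalClosure := key u⁻ (negPart_nonneg u)
    have hmem : u⁺ - u⁻ ∈ G.topologicalClosure := sub_mem hp hq
    rw [posPart_sub_negPart] at hmem
    exact hmem
end
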